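/- Let N ≥ 1 be an integer and f a real number with 0 < f < 1/N. Then every complex root z of the polynomial ch_N(z) = z^N − f·(z^{N−1} + ⋯ + z + 1) satisfies |z| < 1. -/

import Mathlib

/-- `ch_N(z) = z^N - f·(z^{N-1} + ⋯ + z + 1)`, the characteristic polynomial of the
simple Leslie matrix of order `N` with constant fertility rate `f`, as a function on `ℂ`. -/
noncomputable def chLeslie (N : ℕ) (f : ℝ) (z : ℂ) : ℂ :=
  z ^ N - (f : ℂ) * ∑ j ∈ Finset.range N, z ^ j

/-- If `N ≥ 1` and `0 < f < 1/N`, then every complex root of `ch_N` has modulus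
strictly less than `1`. -/
theorem chLeslie_roots_lt_one (N : ℕ) (hN : 1 ≤ N) (f : ℝ) (hf0 : 0 < f)
    (hf : f < 1 / (N : ℝ)) :
    ∀ z : ℂ, chLeslie N f z = 0 → ‖z‖ < 1 := by
  intro z hz
  by_contra h
  push_neg at h
  set r := ‖z‖ with hr
  have hr1 : (1:ℝ) ≤ r := h
  have hrpos : (0:ℝ) < r := lt_of_lt_of_le one_pos hr1
  have heq : z ^ N = (f : ℂ) * ∑ j ∈ Finset.range N, z ^ j := by
    unfold chLeslie at hz
    linear_combination hz
  have hNpos : (0:ℝ) < (N:ℝ) := by exact_mod_cast hN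
  have hfN : f * N < 1 := by
    rw [lt_div_iff₀ hNpos] at hf
    linarith
  have h1 : r ^ N ≤ f * ((N:ℝ) * r ^ (N - 1)) := by
    calc r ^ N = ‖z ^ N‖ := by rw [norm_pow]
      _ = ‖(f : ℂ) * ∑ j ∈ Finset.range N, z ^ j‖ := by rw [heq]
      _ = f * ‖∑ j ∈ Finset.range N, z ^ j‖ := by
          rw [norm_mul, Complex.norm_real, Real.norm_of_nonneg hf0.le]
      _ ≤ f * ∑ j ∈ Finset.range N, r ^ j := by
          gcongr
          calc ‖∑ j ∈ Finset.range N, z ^ j‖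
              ≤ ∑ j ∈ Finset.range N, ‖z ^ j‖ :=
                norm_sum_le _ _
            _ = ∑ j ∈ Finset.range N, r ^ j := by simp [norm_pow, hr]
      _ ≤ f * ((N:ℝ) * r ^ (N - 1)) := by
          gcongr
          calc ∑ j ∈ Finset.range N, r ^ j
              ≤ ∑ j ∈ Finset.range N, r ^ (N - 1) := by
                apply Finset.sum_le_sum
                intro i hi
                exact pow_le_pow_right₀ hr1 (by
                  have := Finset.mem_range.mp hi; omega)
            _ = (N:ℝ) * r ^ (N - 1) := by
                rw [Finset.sum_const, Finset.card_range, nsmul_eq_mul]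
  have h2 : r ^ N = r * r ^ (N - 1) := by
    conv_lhs => rw [show N = 1 + (N - 1) by omega]
    rw [pow_add, pow_one]
  have hp : (0:ℝ) < r ^ (N - 1) := pow_pos hrpos _
  nlinarith [h1, h2, hp, hfN, hr1]
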